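/- arXiv:2104.10061 — 4 statements merged into one kernel-verified Lean document; each statement's English description precedes it below -/
import Mathlib

section
/- Let z_Ψ, z_Φ, a, a' be vectors in C^m. Suppose |⟨z_Ψ − z_Φ, a⟩| ≤ ε and |⟨z_Ψ − z_Φ, a'⟩| ≤ ε, and suppose ‖z_Ψ − a'‖² ≤ ‖z_Ψ − a‖² (optimality of a' for the distorted sketch). Then ‖z_Φ − a'‖₂ ≤ ‖z_Φ − a‖₂ + 2√ε. -/
open scoped InnerProductSpace

theorem asym_sketch_suboptimality {m : ℕ} (zΨ zΦ a a' : EuclideanSpace ℂ (Fin m))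
    (ε : ℝ) (hε : 0 < ε)
    (h1 : ‖⟪zΨ - zΦ, a⟫_ℂ‖ ≤ ε) (h2 : ‖⟪zΨ - zΦ, a'⟫_ℂ‖ ≤ ε)
    (hopt : ‖zΨ - a'‖ ^ 2 ≤ ‖zΨ - a‖ ^ 2) :
    ‖zΦ - a'‖ ≤ ‖zΦ - a‖ + 2 * Real.sqrt ε := by
  set u := zΨ - zΦ with hu
  have e1 : zΦ - a = (zΨ - a) - u := by rw [hu]; abel
  have e2 : zΦ - a' = (zΨ - a') - u := by rw [hu]; abel
  have n1 : ‖zΦ - a‖ ^ 2 = ‖zΨ - a‖ ^ 2 - 2 * RCLike.re (⟪zΨ - a, u⟫_ℂ) + ‖u‖ ^ 2 := by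
    rw [e1, @norm_sub_sq ℂ]
  have n2 : ‖zΦ - a'‖ ^ 2 = ‖zΨ - a'‖ ^ 2 - 2 * RCLike.re (⟪zΨ - a', u⟫_ℂ) + ‖u‖ ^ 2 := by
    rw [e2, @norm_sub_sq ℂ]
  have hre1 : |RCLike.re (⟪u, a⟫_ℂ)| ≤ ε :=
    le_trans (RCLike.abs_re_le_norm _) h1
  have hre2 : |RCLike.re (⟪u, a'⟫_ℂ)| ≤ ε :=
    le_trans (RCLike.abs_re_le_norm _) h2
  have hsym : ∀ v : EuclideanSpace ℂ (Fin m),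
      RCLike.re (⟪zΨ - v, u⟫_ℂ) = RCLike.re (⟪u, zΨ⟫_ℂ) - RCLike.re (⟪u, v⟫_ℂ) := by
    intro v
    rw [inner_re_symm, inner_sub_right, map_sub]
  have key : ‖zΦ - a'‖ ^ 2 ≤ ‖zΦ - a‖ ^ 2 + 4 * ε := by
    rw [n1, n2, hsym a, hsym a']
    have h1' := abs_le.mp hre1
    have h2' := abs_le.mp hre2
    linarith [h1'.1, h1'.2, h2'.1, h2'.2]
  have hs : 0 ≤ Real.sqrt ε := Real.sqrt_nonneg ε
  have hsq : Real.sqrt ε ^ 2 = ε := Real.sq_sqrt hε.le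
  have hbound : ‖zΦ - a'‖ ^ 2 ≤ (‖zΦ - a‖ + 2 * Real.sqrt ε) ^ 2 := by
    have hn : (0:ℝ) ≤ ‖zΦ - a‖ := norm_nonneg _
    nlinarith [key, hsq, hn, hs]
  nlinarith [hbound, norm_nonneg (zΦ - a'), norm_nonneg (zΦ - a), hs]
end

section
/- The one-bit universal quantization function q(t) = sign(cos t) + i·sign(sin t) is mean Lipschitz smooth with constant 8/π: for every δ ∈ (0, π], (1/2π)∫₀^{2π} sup_{|r|≤δ} |q(t+r) − q(t)| dt ≤ (8/π)·δ. -/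
open Real Set MeasureTheory

/-- A 2π-periodic function `f` is mean Lipschitz smooth with constant `L`. -/
noncomputable def MeanLipschitzWith (L : ℝ) (f : ℝ → ℂ) : Prop :=
  ∀ δ : ℝ, 0 < δ → δ ≤ Real.pi →
    (1 / (2 * Real.pi)) * ∫ t in (0:ℝ)..(2 * Real.pi),
        sSup ((fun r => ‖f (t + r) - f t‖) '' Set.Icc (-δ) δ) ≤ L * δ

/-- The sign function: 1 if x ≥ 0, -1 if x < 0. -/
noncomputable def sgn (x : ℝ) : ℝ := if 0 ≤ x then 1 else -1

/-- One-bit universal quantization: q(t) = sign(cos t) + i·sign(sin t). -/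
noncomputable def oneBitQuant (t : ℝ) : ℂ :=
  (sgn (Real.cos t) : ℂ) + Complex.I * (sgn (Real.sin t) : ℂ)

lemma sgn_of_nonneg {x : ℝ} (h : 0 ≤ x) : sgn x = 1 := if_pos h

lemma sgn_of_neg {x : ℝ} (h : x < 0) : sgn x = -1 := if_neg (not_le.2 h)

lemma abs_sgn_sub_le (a b : ℝ) : |sgn a - sgn b| ≤ 2 := by
  unfold sgn; split_ifs <;> norm_num

/-- indicator bump of height 2 on `[a,b]` -/
noncomputable def bump (a b : ℝ) : ℝ → ℝ := (Set.Icc a b).indicator (fun _ => 2)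

lemma bump_nonneg (a b t : ℝ) : 0 ≤ bump a b t := by
  unfold bump Set.indicator; split_ifs <;> norm_num

lemma bump_eq_two {a b t : ℝ} (h : t ∈ Set.Icc a b) : bump a b t = 2 :=
  Set.indicator_of_mem h _

lemma bump_integrable (a b : ℝ) : Integrable (bump a b) := by
  unfold bump
  rw [integrable_indicator_iff measurableSet_Icc]
  exact integrableOn_const (by rw [Real.volume_Icc]; exact ENNReal.ofReal_ne_top)

lemma bump_intervalIntegrable (a b : ℝ) :
    IntervalIntegrable (bump a b) volume 0 (2 * Real.pi) :=
  (bump_integrable a b).intervalIntegrable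

lemma bump_integral_le (a b : ℝ) (hab : a ≤ b) :
    (∫ t in (0:ℝ)..(2 * Real.pi), bump a b t) ≤ 2 * (b - a) := by
  rw [intervalIntegral.integral_of_le (by positivity)]
  have h1 : (∫ t in Set.Ioc (0:ℝ) (2 * Real.pi), bump a b t) ≤ ∫ t, bump a b t :=
    setIntegral_le_integral (bump_integrable a b)
      (Filter.Eventually.of_forall fun t => bump_nonneg a b t)
  have h2 : (∫ t, bump a b t) = 2 * (b - a) := by
    unfold bump
    rw [MeasureTheory.integral_indicator measurableSet_Icc, setIntegral_const,
      Real.volume_real_Icc_of_le hab, smul_eq_mul]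
    ring
  linarith

lemma abs_oneBitQuant_le (t : ℝ) : ‖oneBitQuant t‖ ≤ 2 := by
  unfold oneBitQuant
  calc ‖(sgn (Real.cos t) : ℂ) + Complex.I * (sgn (Real.sin t) : ℂ)‖
      ≤ ‖(sgn (Real.cos t) : ℂ)‖ + ‖Complex.I * (sgn (Real.sin t) : ℂ)‖ :=
        norm_add_le _ _
    _ = |sgn (Real.cos t)| + |sgn (Real.sin t)| := by
        rw [norm_mul, Complex.norm_I, Complex.norm_real, Complex.norm_real, one_mul, Real.norm_eq_abs,
          Real.norm_eq_abs]
    _ ≤ 2 := by unfold sgn; split_ifs <;> norm_num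

lemma oneBitQuant_abs_sub_le (s t : ℝ) :
    ‖oneBitQuant s - oneBitQuant t‖ ≤
      |sgn (Real.cos s) - sgn (Real.cos t)| + |sgn (Real.sin s) - sgn (Real.sin t)| := by
  have : oneBitQuant s - oneBitQuant t =
      ((sgn (Real.cos s) - sgn (Real.cos t) : ℝ) : ℂ) +
        Complex.I * ((sgn (Real.sin s) - sgn (Real.sin t) : ℝ) : ℂ) := by
    unfold oneBitQuant; push_cast; ring
  rw [this]
  calc ‖_‖ ≤ ‖((sgn (Real.cos s) - sgn (Real.cos t) : ℝ) : ℂ)‖ +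
        ‖Complex.I * ((sgn (Real.sin s) - sgn (Real.sin t) : ℝ) : ℂ)‖ :=
        norm_add_le _ _
    _ = _ := by rw [norm_mul, Complex.norm_I, Complex.norm_real, Complex.norm_real, one_mul, Real.norm_eq_abs,
          Real.norm_eq_abs]

lemma cos_part {δ t r : ℝ} (hδ : 0 < δ) (hδ2 : δ ≤ Real.pi / 2)
    (ht : t ∈ Set.Icc 0 (2 * Real.pi)) (hr : r ∈ Set.Icc (-δ) δ) :
    |sgn (Real.cos (t + r)) - sgn (Real.cos t)| ≤
      bump (Real.pi / 2 - δ) (Real.pi / 2 + δ) t +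
        bump (3 * Real.pi / 2 - δ) (3 * Real.pi / 2 + δ) t := by
  obtain ⟨ht0, ht2⟩ := ht
  obtain ⟨hr1, hr2⟩ := hr
  have hπ := Real.pi_pos
  by_cases h1 : t ∈ Set.Icc (Real.pi / 2 - δ) (Real.pi / 2 + δ)
  · rw [bump_eq_two h1]
    have := abs_sgn_sub_le (Real.cos (t + r)) (Real.cos t)
    have := bump_nonneg (3 * Real.pi / 2 - δ) (3 * Real.pi / 2 + δ) t
    linarith
  by_cases h2 : t ∈ Set.Icc (3 * Real.pi / 2 - δ) (3 * Real.pi / 2 + δ)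
  · rw [bump_eq_two h2]
    have := abs_sgn_sub_le (Real.cos (t + r)) (Real.cos t)
    have := bump_nonneg (Real.pi / 2 - δ) (Real.pi / 2 + δ) t
    linarith
  · have hb1 := bump_nonneg (Real.pi / 2 - δ) (Real.pi / 2 + δ) t
    have hb2 := bump_nonneg (3 * Real.pi / 2 - δ) (3 * Real.pi / 2 + δ) t
    rw [Set.mem_Icc, not_and_or, not_le, not_le] at h1 h2
    have heq : sgn (Real.cos (t + r)) = sgn (Real.cos t) := by
      rcases h1 with h1 | h1
      · -- t < π/2 - δ
        rw [sgn_of_nonneg (Real.cos_nonneg_of_mem_Icc ⟨by linarith, by linarith⟩),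
          sgn_of_nonneg (Real.cos_nonneg_of_mem_Icc ⟨by linarith, by linarith⟩)]
      · rcases h2 with h2 | h2
        · -- π/2 + δ < t < 3π/2 - δ
          rw [sgn_of_neg (Real.cos_neg_of_pi_div_two_lt_of_lt (by linarith) (by linarith)),
            sgn_of_neg (Real.cos_neg_of_pi_div_two_lt_of_lt (by linarith) (by linarith))]
        · -- 3π/2 + δ < t ≤ 2π
          rw [← Real.cos_sub_two_pi (t + r), ← Real.cos_sub_two_pi t,
            sgn_of_nonneg (Real.cos_nonneg_of_mem_Icc ⟨by linarith, by linarith⟩),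
            sgn_of_nonneg (Real.cos_nonneg_of_mem_Icc ⟨by linarith, by linarith⟩)]
    rw [heq, sub_self, abs_zero]
    linarith

lemma sin_part {δ t r : ℝ} (hδ : 0 < δ) (hδ2 : δ ≤ Real.pi / 2)
    (ht : t ∈ Set.Icc 0 (2 * Real.pi)) (hr : r ∈ Set.Icc (-δ) δ) :
    |sgn (Real.sin (t + r)) - sgn (Real.sin t)| ≤
      bump 0 δ t + bump (Real.pi - δ) (Real.pi + δ) t + bump (2 * Real.pi - δ) (2 * Real.pi) t := by
  obtain ⟨ht0, ht2⟩ := ht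
  obtain ⟨hr1, hr2⟩ := hr
  have hπ := Real.pi_pos
  by_cases h1 : t ∈ Set.Icc (0:ℝ) δ
  · rw [bump_eq_two h1]
    have := abs_sgn_sub_le (Real.sin (t + r)) (Real.sin t)
    have := bump_nonneg (Real.pi - δ) (Real.pi + δ) t
    have := bump_nonneg (2 * Real.pi - δ) (2 * Real.pi) t
    linarith
  by_cases h2 : t ∈ Set.Icc (Real.pi - δ) (Real.pi + δ)
  · rw [bump_eq_two h2]
    have := abs_sgn_sub_le (Real.sin (t + r)) (Real.sin t)
    have := bump_nonneg (0:ℝ) δ t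
    have := bump_nonneg (2 * Real.pi - δ) (2 * Real.pi) t
    linarith
  by_cases h3 : t ∈ Set.Icc (2 * Real.pi - δ) (2 * Real.pi)
  · rw [bump_eq_two h3]
    have := abs_sgn_sub_le (Real.sin (t + r)) (Real.sin t)
    have := bump_nonneg (0:ℝ) δ t
    have := bump_nonneg (Real.pi - δ) (Real.pi + δ) t
    linarith
  · have hb1 := bump_nonneg (0:ℝ) δ t
    have hb2 := bump_nonneg (Real.pi - δ) (Real.pi + δ) t
    have hb3 := bump_nonneg (2 * Real.pi - δ) (2 * Real.pi) t
    rw [Set.mem_Icc, not_and_or, not_le, not_le] at h1 h2 h3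
    have hδt : δ < t := h1.resolve_left (not_lt.2 ht0)
    have ht2' : t < 2 * Real.pi - δ := h3.resolve_right (not_lt.2 ht2)
    have heq : sgn (Real.sin (t + r)) = sgn (Real.sin t) := by
      rcases h2 with h2 | h2
      · -- δ < t < π - δ : sin positive
        rw [sgn_of_nonneg (Real.sin_pos_of_pos_of_lt_pi (by linarith) (by linarith)).le,
          sgn_of_nonneg (Real.sin_pos_of_pos_of_lt_pi (by linarith) (by linarith)).le]
      · -- π + δ < t < 2π - δ : sin negative
        rw [← Real.sin_sub_two_pi (t + r), ← Real.sin_sub_two_pi t,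
          sgn_of_neg (Real.sin_neg_of_neg_of_neg_pi_lt (by linarith) (by linarith)),
          sgn_of_neg (Real.sin_neg_of_neg_of_neg_pi_lt (by linarith) (by linarith))]
    rw [heq, sub_self, abs_zero]
    linarith

theorem oneBitQuant_meanLipschitz :
    MeanLipschitzWith (8 / Real.pi) oneBitQuant := by
  intro δ hδ hδπ
  have hπ := Real.pi_pos
  set g : ℝ → ℝ := fun t =>
    sSup ((fun r => ‖oneBitQuant (t + r) - oneBitQuant t‖) '' Set.Icc (-δ) δ)
      with hg
  have hIcc : (Set.Icc (-δ) δ).Nonempty := ⟨0, by constructor <;> linarith⟩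
  by_cases hint : IntervalIntegrable g volume 0 (2 * Real.pi)
  · rcases le_or_gt δ (Real.pi / 2) with hcase | hcase
    · -- main case: bound by sum of bumps
      set h : ℝ → ℝ := fun t =>
        bump (Real.pi / 2 - δ) (Real.pi / 2 + δ) t +
          bump (3 * Real.pi / 2 - δ) (3 * Real.pi / 2 + δ) t +
          (bump 0 δ t + bump (Real.pi - δ) (Real.pi + δ) t +
            bump (2 * Real.pi - δ) (2 * Real.pi) t) with hh
      have hhint : IntervalIntegrable h volume 0 (2 * Real.pi) :=
        (((bump_intervalIntegrable _ _).add (bump_intervalIntegrable _ _)).add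
          (((bump_intervalIntegrable _ _).add (bump_intervalIntegrable _ _)).add
            (bump_intervalIntegrable _ _)))
      have hmono : ∀ t ∈ Set.Icc (0:ℝ) (2 * Real.pi), g t ≤ h t := by
        intro t ht
        have hnn : 0 ≤ h t := by
          have := bump_nonneg (Real.pi / 2 - δ) (Real.pi / 2 + δ) t
          have := bump_nonneg (3 * Real.pi / 2 - δ) (3 * Real.pi / 2 + δ) t
          have := bump_nonneg (0:ℝ) δ t
          have := bump_nonneg (Real.pi - δ) (Real.pi + δ) t
          have := bump_nonneg (2 * Real.pi - δ) (2 * Real.pi) t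
          rw [hh]; dsimp only; linarith
        apply Real.sSup_le _ hnn
        rintro x ⟨r, hr, rfl⟩
        calc ‖oneBitQuant (t + r) - oneBitQuant t‖
            ≤ |sgn (Real.cos (t + r)) - sgn (Real.cos t)| +
              |sgn (Real.sin (t + r)) - sgn (Real.sin t)| := oneBitQuant_abs_sub_le _ _
          _ ≤ h t := by
              have h1 := cos_part hδ hcase ht hr
              have h2 := sin_part hδ hcase ht hr
              rw [hh]; dsimp only; linarith
      have hInt : (∫ t in (0:ℝ)..(2 * Real.pi), g t) ≤ 16 * δ := by
        calc (∫ t in (0:ℝ)..(2 * Real.pi), g t)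
            ≤ ∫ t in (0:ℝ)..(2 * Real.pi), h t :=
              intervalIntegral.integral_mono_on (by positivity) hint hhint hmono
          _ = (∫ t in (0:ℝ)..(2 * Real.pi), bump (Real.pi / 2 - δ) (Real.pi / 2 + δ) t) +
                (∫ t in (0:ℝ)..(2 * Real.pi), bump (3 * Real.pi / 2 - δ) (3 * Real.pi / 2 + δ) t) +
                ((∫ t in (0:ℝ)..(2 * Real.pi), bump 0 δ t) +
                  (∫ t in (0:ℝ)..(2 * Real.pi), bump (Real.pi - δ) (Real.pi + δ) t) +
                  (∫ t in (0:ℝ)..(2 * Real.pi), bump (2 * Real.pi - δ) (2 * Real.pi) t)) := by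
              rw [hh]
              rw [intervalIntegral.integral_add ((bump_intervalIntegrable _ _).add
                    (bump_intervalIntegrable _ _))
                  (((bump_intervalIntegrable _ _).add (bump_intervalIntegrable _ _)).add
                    (bump_intervalIntegrable _ _)),
                intervalIntegral.integral_add (bump_intervalIntegrable _ _)
                  (bump_intervalIntegrable _ _),
                intervalIntegral.integral_add ((bump_intervalIntegrable _ _).add
                    (bump_intervalIntegrable _ _)) (bump_intervalIntegrable _ _),
                intervalIntegral.integral_add (bump_intervalIntegrable _ _)
                  (bump_intervalIntegrable _ _)]
          _ ≤ 2 * ((Real.pi / 2 + δ) - (Real.pi / 2 - δ)) +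
                2 * ((3 * Real.pi / 2 + δ) - (3 * Real.pi / 2 - δ)) +
                (2 * (δ - 0) + 2 * ((Real.pi + δ) - (Real.pi - δ)) +
                  2 * (2 * Real.pi - (2 * Real.pi - δ))) := by
              gcongr <;> exact bump_integral_le _ _ (by linarith)
          _ = 16 * δ := by ring
      calc (1 / (2 * Real.pi)) * ∫ t in (0:ℝ)..(2 * Real.pi), g t
          ≤ (1 / (2 * Real.pi)) * (16 * δ) := by
            apply mul_le_mul_of_nonneg_left hInt (by positivity)
        _ = 8 / Real.pi * δ := by field_simp; ring
    · -- δ > π/2 : trivial bound by 4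
      have hmono : ∀ t ∈ Set.Icc (0:ℝ) (2 * Real.pi), g t ≤ (4:ℝ) := by
        intro t _
        apply Real.sSup_le _ (by norm_num)
        rintro x ⟨r, _, rfl⟩
        calc ‖oneBitQuant (t + r) - oneBitQuant t‖
            ≤ ‖oneBitQuant (t + r)‖ + ‖oneBitQuant t‖ :=
              norm_sub_le _ _
          _ ≤ 4 := by
              have := abs_oneBitQuant_le (t + r)
              have := abs_oneBitQuant_le t
              linarith
      have hInt : (∫ t in (0:ℝ)..(2 * Real.pi), g t) ≤ 8 * Real.pi := by
        calc (∫ t in (0:ℝ)..(2 * Real.pi), g t)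
            ≤ ∫ _t in (0:ℝ)..(2 * Real.pi), (4:ℝ) :=
              intervalIntegral.integral_mono_on (by positivity) hint
                intervalIntegrable_const hmono
          _ = 8 * Real.pi := by
              rw [intervalIntegral.integral_const]; simp; ring
      calc (1 / (2 * Real.pi)) * ∫ t in (0:ℝ)..(2 * Real.pi), g t
          ≤ (1 / (2 * Real.pi)) * (8 * Real.pi) := by
            apply mul_le_mul_of_nonneg_left hInt (by positivity)
        _ = 4 := by field_simp; ring
        _ ≤ 8 / Real.pi * δ := by
            rw [div_mul_eq_mul_div, le_div_iff₀ hπ]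
            linarith
  · rw [intervalIntegral.integral_undef hint, mul_zero]
    positivity
end

section
/- The complex modulo function f_mod(t) = mod_{2π}(t) + i·mod_{2π}(t − π/2) is mean Lipschitz smooth with constant (4 + √2)/π: for every δ ∈ (0, π], (1/2π)∫₀^{2π} sup_{|r|≤δ} |f_mod(t+r) − f_mod(t)| dt ≤ ((4+√2)/π)·δ. -/
/-- The normalized 2π-periodic sawtooth wave. -/
noncomputable def sawtooth (t : ℝ) : ℝ :=
  2 * (t / (2 * Real.pi) - ⌊t / (2 * Real.pi)⌋) - 1

/-- The complex modulo function f_mod(t) = mod_{2π}(t) + i·mod_{2π}(t − π/2). -/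
noncomputable def fmod (t : ℝ) : ℂ :=
  (sawtooth t : ℂ) + Complex.I * (sawtooth (t - Real.pi / 2) : ℂ)

lemma abs_sawtooth_le (s : ℝ) : |sawtooth s| ≤ 1 := by
  have h1 := Int.fract_nonneg (s / (2 * Real.pi))
  have h2 := Int.fract_lt_one (s / (2 * Real.pi))
  rw [Int.fract] at h1 h2
  rw [sawtooth, abs_le]
  constructor <;> linarith

lemma sawtooth_eq (k : ℤ) (s : ℝ) (h1 : 2 * Real.pi * k ≤ s) (h2 : s < 2 * Real.pi * (k + 1)) :
    sawtooth s = s / Real.pi - (2 * k + 1) := by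
  have hπ := Real.pi_pos
  have hf : ⌊s / (2 * Real.pi)⌋ = k := by
    rw [Int.floor_eq_iff]
    constructor
    · rw [le_div_iff₀ (by positivity)]; push_cast; linarith
    · rw [div_lt_iff₀ (by positivity)]; push_cast; linarith
  rw [sawtooth, hf]
  field_simp
  ring

lemma sawtooth_periodic : Function.Periodic sawtooth (2 * Real.pi) := by
  intro t
  have hπ : Real.pi ≠ 0 := Real.pi_ne_zero
  unfold sawtooth
  have h : (t + 2 * Real.pi) / (2 * Real.pi) = t / (2 * Real.pi) + 1 := by field_simp
  rw [h, Int.floor_add_one]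
  push_cast
  ring

lemma fmod_periodic : Function.Periodic fmod (2 * Real.pi) := by
  intro t
  unfold fmod
  rw [sawtooth_periodic t,
    show t + 2 * Real.pi - Real.pi / 2 = (t - Real.pi / 2) + 2 * Real.pi by ring,
    sawtooth_periodic]

lemma sawtooth_diff {t δ r : ℝ} (h : ∀ k : ℤ, δ < |t - 2 * Real.pi * k|) (hr : |r| ≤ δ) :
    |sawtooth (t + r) - sawtooth t| ≤ δ / Real.pi := by
  have hπ := Real.pi_pos
  set k := ⌊t / (2 * Real.pi)⌋ with hk
  have h1 : 2 * Real.pi * k ≤ t := by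
    have := Int.floor_le (t / (2 * Real.pi))
    rw [le_div_iff₀ (by positivity)] at this
    linarith
  have h2 : t < 2 * Real.pi * ((k : ℝ) + 1) := by
    have := Int.lt_floor_add_one (t / (2 * Real.pi))
    rw [div_lt_iff₀ (by positivity)] at this
    push_cast at this ⊢
    linarith
  have hk1 := h k
  rw [abs_of_nonneg (by linarith)] at hk1
  have hk2 := h (k + 1)
  push_cast at hk2
  rw [abs_of_neg (by linarith)] at hk2
  have hr1 := (abs_le.1 hr).1
  have hr2 := (abs_le.1 hr).2
  rw [sawtooth_eq k t h1 (by push_cast; linarith),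
    sawtooth_eq k (t + r) (by linarith) (by push_cast; linarith)]
  rw [show (t + r) / Real.pi - (2 * (k:ℝ) + 1) - (t / Real.pi - (2 * (k:ℝ) + 1)) = r / Real.pi
    by ring]
  rw [abs_div, abs_of_pos hπ]
  gcongr

lemma window {t δ : ℝ} (hδ2 : δ < 2) (ht : |t| ≤ 5 * Real.pi / 4) (hout : δ < |t|) :
    ∀ k : ℤ, δ < |t - 2 * Real.pi * k| := by
  intro k
  rcases eq_or_ne k 0 with rfl | hk
  · simpa using hout
  · have h1 : (1:ℝ) ≤ |(k:ℝ)| := by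
      rw [← Int.cast_abs]
      exact_mod_cast Int.one_le_abs hk
    have h2 : |2 * Real.pi * (k:ℝ)| - |t| ≤ |t - 2 * Real.pi * k| := by
      rw [abs_sub_comm]
      exact abs_sub_abs_le_abs_sub _ _
    have h3 : |2 * Real.pi * (k:ℝ)| = 2 * Real.pi * |(k:ℝ)| := by
      rw [abs_mul, abs_of_pos (by positivity : (0:ℝ) < 2 * Real.pi)]
    have hπ3 := Real.pi_gt_three
    nlinarith [abs_nonneg (k:ℝ)]

lemma fmod_sub (t r : ℝ) :
    fmod (t + r) - fmod t =
      ((sawtooth (t + r) - sawtooth t : ℝ) : ℂ)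
        + ((sawtooth (t - Real.pi / 2 + r) - sawtooth (t - Real.pi / 2) : ℝ) : ℂ) * Complex.I := by
  unfold fmod
  rw [show t + r - Real.pi / 2 = t - Real.pi / 2 + r by ring]
  push_cast
  ring

lemma abs_fmod_sub_le {t r x y : ℝ} (hx : |sawtooth (t + r) - sawtooth t| ≤ x)
    (hy : |sawtooth (t - Real.pi / 2 + r) - sawtooth (t - Real.pi / 2)| ≤ y) :
    ‖fmod (t + r) - fmod t‖ ≤ Real.sqrt (x ^ 2 + y ^ 2) := by
  rw [fmod_sub, Complex.norm_add_mul_I]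
  apply Real.sqrt_le_sqrt
  have h1 := abs_le.mp hx
  have h2 := abs_le.mp hy
  exact add_le_add (sq_le_sq' (by linarith) h1.2) (sq_le_sq' (by linarith) h2.2)

lemma integral_indicator_Icc {a b c d : ℝ} (h1 : a < c) (h2 : d ≤ b) (h3 : c ≤ d) :
    ∫ x in a..b, Set.indicator (Set.Icc c d) (fun _ => (2:ℝ)) x = 2 * (d - c) := by
  have hsub : Set.Icc c d ⊆ Set.Ioc a b := fun x hx =>
    Set.mem_Ioc.mpr ⟨lt_of_lt_of_le h1 hx.1, le_trans hx.2 h2⟩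
  rw [intervalIntegral.integral_of_le (by linarith),
    MeasureTheory.setIntegral_indicator measurableSet_Icc,
    Set.inter_eq_self_of_subset_right hsub,
    MeasureTheory.setIntegral_const, Real.volume_real_Icc_of_le h3,
    smul_eq_mul]
  ring

lemma intervalIntegrable_indicator_Icc (c d a b : ℝ) :
    IntervalIntegrable (Set.indicator (Set.Icc c d) (fun _ => (2:ℝ)))
      MeasureTheory.volume a b := by
  constructor <;>
  · rw [MeasureTheory.IntegrableOn, MeasureTheory.integrable_indicator_iff measurableSet_Icc]
    refine MeasureTheory.integrableOn_const ?_
    exact (lt_of_le_of_lt (MeasureTheory.Measure.restrict_apply_le _ _) measure_Icc_lt_top).ne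

lemma pointwise_bound {δ : ℝ} (hδ : 0 < δ) (hδ2 : δ < 2)
    {t : ℝ} (ht1 : -(3 * Real.pi / 4) ≤ t) (ht2 : t ≤ 5 * Real.pi / 4)
    {r : ℝ} (hr : |r| ≤ δ) :
    ‖fmod (t + r) - fmod t‖ ≤
      Real.sqrt 2 * δ / Real.pi
        + Set.indicator (Set.Icc (-δ) δ) (fun _ => (2:ℝ)) t
        + Set.indicator (Set.Icc (Real.pi / 2 - δ) (Real.pi / 2 + δ)) (fun _ => (2:ℝ)) t := by
  have hπ := Real.pi_pos
  have hπ3 := Real.pi_gt_three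
  have hs2 : Real.sqrt 2 ^ 2 = 2 := Real.sq_sqrt (by norm_num)
  have hs2' : (0:ℝ) ≤ Real.sqrt 2 := Real.sqrt_nonneg 2
  have hx0 : (0:ℝ) ≤ δ / Real.pi := by positivity
  have habs : ∀ x y : ℝ, |x - y| ≤ |x| + |y| := fun x y => by
    rw [sub_eq_add_neg]
    exact (abs_add_le _ _).trans (by rw [abs_neg])
  have ha2 : |sawtooth (t + r) - sawtooth t| ≤ 2 :=
    (habs _ _).trans (by linarith [abs_sawtooth_le (t + r), abs_sawtooth_le t])
  have hb2 : |sawtooth (t - Real.pi / 2 + r) - sawtooth (t - Real.pi / 2)| ≤ 2 :=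
    (habs _ _).trans
      (by linarith [abs_sawtooth_le (t - Real.pi / 2 + r), abs_sawtooth_le (t - Real.pi / 2)])
  have hc0 : (0:ℝ) ≤ Real.sqrt 2 * δ / Real.pi := by positivity
  have hcsq : (Real.sqrt 2 * δ / Real.pi) ^ 2 = 2 * (δ / Real.pi) ^ 2 := by
    rw [mul_div_assoc, mul_pow, hs2]
  have sqrtle : ∀ x y B : ℝ, 0 ≤ B → x ^ 2 + y ^ 2 ≤ B ^ 2 → Real.sqrt (x ^ 2 + y ^ 2) ≤ B := by
    intro x y B hB h
    rw [show B = Real.sqrt (B ^ 2) from (Real.sqrt_sq hB).symm]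
    exact Real.sqrt_le_sqrt h
  by_cases hA : t ∈ Set.Icc (-δ) δ
  · by_cases hB : t ∈ Set.Icc (Real.pi / 2 - δ) (Real.pi / 2 + δ)
    · rw [Set.indicator_of_mem hA, Set.indicator_of_mem hB]
      refine (abs_fmod_sub_le ha2 hb2).trans (sqrtle _ _ _ (by positivity) ?_)
      nlinarith [hcsq, hc0, sq_nonneg (δ / Real.pi)]
    · rw [Set.indicator_of_mem hA, Set.indicator_of_notMem hB, add_zero]
      have houtB : δ < |t - Real.pi / 2| := by
        rw [Set.mem_Icc, not_and_or, not_le, not_le] at hB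
        rcases hB with h | h
        · calc δ < -(t - Real.pi / 2) := by linarith
            _ ≤ |t - Real.pi / 2| := neg_le_abs _
        · exact lt_of_lt_of_le (by linarith) (le_abs_self _)
      have hbd : |sawtooth (t - Real.pi / 2 + r) - sawtooth (t - Real.pi / 2)| ≤ δ / Real.pi :=
        sawtooth_diff (window hδ2 (by rw [abs_le]; constructor <;> linarith) houtB) hr
      refine (abs_fmod_sub_le ha2 hbd).trans (sqrtle _ _ _ (by positivity) ?_)
      nlinarith [hcsq, hc0, sq_nonneg (δ / Real.pi)]
  · have houtA : δ < |t| := by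
      rw [Set.mem_Icc, not_and_or, not_le, not_le] at hA
      rcases hA with h | h
      · calc δ < -t := by linarith
          _ ≤ |t| := neg_le_abs _
      · exact lt_of_lt_of_le h (le_abs_self _)
    have had : |sawtooth (t + r) - sawtooth t| ≤ δ / Real.pi :=
      sawtooth_diff (window hδ2 (by rw [abs_le]; constructor <;> linarith) houtA) hr
    by_cases hB : t ∈ Set.Icc (Real.pi / 2 - δ) (Real.pi / 2 + δ)
    · rw [Set.indicator_of_notMem hA, Set.indicator_of_mem hB, add_zero]
      refine (abs_fmod_sub_le had hb2).trans (sqrtle _ _ _ (by positivity) ?_)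
      nlinarith [hcsq, hc0, sq_nonneg (δ / Real.pi)]
    · rw [Set.indicator_of_notMem hA, Set.indicator_of_notMem hB, add_zero, add_zero]
      have houtB : δ < |t - Real.pi / 2| := by
        rw [Set.mem_Icc, not_and_or, not_le, not_le] at hB
        rcases hB with h | h
        · calc δ < -(t - Real.pi / 2) := by linarith
            _ ≤ |t - Real.pi / 2| := neg_le_abs _
        · exact lt_of_lt_of_le (by linarith) (le_abs_self _)
      have hbd : |sawtooth (t - Real.pi / 2 + r) - sawtooth (t - Real.pi / 2)| ≤ δ / Real.pi :=
        sawtooth_diff (window hδ2 (by rw [abs_le]; constructor <;> linarith) houtB) hr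
      refine (abs_fmod_sub_le had hbd).trans (sqrtle _ _ _ (by positivity) ?_)
      nlinarith [hcsq, hc0, sq_nonneg (δ / Real.pi)]

theorem fmod_meanLipschitz :
    MeanLipschitzWith ((4 + Real.sqrt 2) / Real.pi) fmod := by
  intro δ hδ hδπ
  have hπ := Real.pi_pos
  have hπ3 := Real.pi_gt_three
  have hπ4 := Real.pi_lt_d2
  have hs2 : Real.sqrt 2 ^ 2 = 2 := Real.sq_sqrt (by norm_num)
  have hs2' : (0:ℝ) ≤ Real.sqrt 2 := Real.sqrt_nonneg 2
  have hs2lt : Real.sqrt 2 < 1.5 := by nlinarith [sq_nonneg (Real.sqrt 2 - 1.5)]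
  set g : ℝ → ℝ :=
    fun t => sSup ((fun r => ‖fmod (t + r) - fmod t‖) '' Set.Icc (-δ) δ) with hgdef
  have hRHS : 0 ≤ (4 + Real.sqrt 2) / Real.pi * δ := by positivity
  have hgper : Function.Periodic g (2 * Real.pi) := by
    intro t
    have h : (fun r => ‖fmod (t + 2 * Real.pi + r) - fmod (t + 2 * Real.pi)‖)
        = fun r => ‖fmod (t + r) - fmod t‖ := by
      funext r
      rw [show t + 2 * Real.pi + r = (t + r) + 2 * Real.pi by ring, fmod_periodic (t + r),
        fmod_periodic t]
    simp only [hgdef, h]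
  rcases le_or_gt 2 δ with hcase | hcase
  · -- δ ≥ 2 : trivial bound
    have habs : ∀ s : ℝ, ‖fmod s‖ ≤ Real.sqrt 2 := by
      intro s
      unfold fmod
      rw [show ((sawtooth s : ℂ) + Complex.I * (sawtooth (s - Real.pi / 2) : ℂ))
          = ((sawtooth s : ℝ) : ℂ) + ((sawtooth (s - Real.pi / 2) : ℝ) : ℂ) * Complex.I by ring,
        Complex.norm_add_mul_I]
      apply Real.sqrt_le_sqrt
      have h1 := abs_le.mp (abs_sawtooth_le s)
      have h2 := abs_le.mp (abs_sawtooth_le (s - Real.pi / 2))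
      nlinarith
    have hb : ∀ t ∈ Set.Icc (0:ℝ) (2 * Real.pi), g t ≤ 2 * Real.sqrt 2 := by
      intro t _
      apply Real.sSup_le
      · rintro x ⟨r, _, rfl⟩
        calc ‖fmod (t + r) - fmod t‖
            ≤ ‖fmod (t + r)‖ + ‖fmod t‖ := by
              simpa [sub_eq_add_neg] using norm_add_le (fmod (t + r)) (-(fmod t))
          _ ≤ 2 * Real.sqrt 2 := by linarith [habs (t + r), habs t]
      · positivity
    by_cases hint : IntervalIntegrable g MeasureTheory.volume 0 (2 * Real.pi)
    · have hmono := intervalIntegral.integral_mono_on (by linarith) hint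
        intervalIntegrable_const hb
      rw [intervalIntegral.integral_const, smul_eq_mul] at hmono
      have key : 2 * Real.sqrt 2 ≤ (4 + Real.sqrt 2) / Real.pi * δ := by
        rw [div_mul_eq_mul_div, le_div_iff₀ hπ]
        nlinarith
      calc (1 / (2 * Real.pi)) * ∫ t in (0:ℝ)..(2 * Real.pi), g t
          ≤ (1 / (2 * Real.pi)) * ((2 * Real.pi - 0) * (2 * Real.sqrt 2)) := by
            have hnn : (0:ℝ) ≤ 1 / (2 * Real.pi) := by positivity
            exact mul_le_mul_of_nonneg_left hmono hnn
        _ = 2 * Real.sqrt 2 := by field_simp; ring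
        _ ≤ (4 + Real.sqrt 2) / Real.pi * δ := key
    · rw [intervalIntegral.integral_undef hint, mul_zero]
      exact hRHS
  · -- δ < 2
    have hshift : (∫ t in (0:ℝ)..(2 * Real.pi), g t)
        = ∫ t in (-(3 * Real.pi / 4))..(-(3 * Real.pi / 4) + 2 * Real.pi), g t := by
      have h := hgper.intervalIntegral_add_eq 0 (-(3 * Real.pi / 4))
      simpa using h
    set h : ℝ → ℝ := fun t => Real.sqrt 2 * δ / Real.pi
        + Set.indicator (Set.Icc (-δ) δ) (fun _ => (2:ℝ)) t
        + Set.indicator (Set.Icc (Real.pi / 2 - δ) (Real.pi / 2 + δ)) (fun _ => (2:ℝ)) t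
      with hhdef
    have hhint1 : IntervalIntegrable (fun t => Real.sqrt 2 * δ / Real.pi
        + Set.indicator (Set.Icc (-δ) δ) (fun _ => (2:ℝ)) t) MeasureTheory.volume
        (-(3 * Real.pi / 4)) (-(3 * Real.pi / 4) + 2 * Real.pi) :=
      intervalIntegrable_const.add (intervalIntegrable_indicator_Icc _ _ _ _)
    have hhint : IntervalIntegrable h MeasureTheory.volume
        (-(3 * Real.pi / 4)) (-(3 * Real.pi / 4) + 2 * Real.pi) :=
      hhint1.add (intervalIntegrable_indicator_Icc _ _ _ _)
    have hinth : (∫ t in (-(3 * Real.pi / 4))..(-(3 * Real.pi / 4) + 2 * Real.pi), h t)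
        = Real.sqrt 2 * δ / Real.pi * (2 * Real.pi) + 2 * (2 * δ) + 2 * (2 * δ) := by
      rw [hhdef]
      rw [intervalIntegral.integral_add hhint1 (intervalIntegrable_indicator_Icc _ _ _ _),
        intervalIntegral.integral_add intervalIntegrable_const
          (intervalIntegrable_indicator_Icc _ _ _ _),
        intervalIntegral.integral_const,
        integral_indicator_Icc (by linarith) (by linarith) (by linarith),
        integral_indicator_Icc (by linarith) (by linarith) (by linarith), smul_eq_mul]
      ring
    have hbound : ∀ t ∈ Set.Icc (-(3 * Real.pi / 4)) (-(3 * Real.pi / 4) + 2 * Real.pi),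
        g t ≤ h t := by
      intro t ht
      apply Real.sSup_le
      · rintro x ⟨r, hr, rfl⟩
        exact pointwise_bound hδ hcase ht.1 (by linarith [ht.2]) (abs_le.mpr ⟨hr.1, hr.2⟩)
      · have h1 : 0 ≤ Set.indicator (Set.Icc (-δ) δ) (fun _ => (2:ℝ)) t :=
          Set.indicator_nonneg (fun _ _ => by norm_num) t
        have h2 : 0 ≤ Set.indicator (Set.Icc (Real.pi / 2 - δ) (Real.pi / 2 + δ))
            (fun _ => (2:ℝ)) t := Set.indicator_nonneg (fun _ _ => by norm_num) t
        have h3 : (0:ℝ) ≤ Real.sqrt 2 * δ / Real.pi := by positivity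
        have h4 : h t = Real.sqrt 2 * δ / Real.pi
            + Set.indicator (Set.Icc (-δ) δ) (fun _ => (2:ℝ)) t
            + Set.indicator (Set.Icc (Real.pi / 2 - δ) (Real.pi / 2 + δ)) (fun _ => (2:ℝ)) t :=
          rfl
        rw [h4]
        linarith
    by_cases hint : IntervalIntegrable g MeasureTheory.volume
        (-(3 * Real.pi / 4)) (-(3 * Real.pi / 4) + 2 * Real.pi)
    · have hmono := intervalIntegral.integral_mono_on (by linarith) hint hhint hbound
      rw [hinth] at hmono
      rw [hshift]
      calc (1 / (2 * Real.pi))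
            * ∫ t in (-(3 * Real.pi / 4))..(-(3 * Real.pi / 4) + 2 * Real.pi), g t
          ≤ (1 / (2 * Real.pi)) * (Real.sqrt 2 * δ / Real.pi * (2 * Real.pi)
              + 2 * (2 * δ) + 2 * (2 * δ)) :=
            mul_le_mul_of_nonneg_left hmono (by positivity : (0:ℝ) ≤ 1 / (2 * Real.pi))
        _ = (4 + Real.sqrt 2) / Real.pi * δ := by field_simp; ring
    · rw [hshift, intervalIntegral.integral_undef hint, mul_zero]
      exact hRHS
end

section
/- Suppose a seminorm ‖·‖_R on signed measures, sketch operators A_Φ, A_Ψ : M → ℂ^m, and a model set G satisfy: (LRIP) ‖P − Q‖_R ≤ γ‖A_Φ(P) − A_Φ(Q)‖₂ for all P, Q ∈ G; and the asymmetric minimizer θ' satisfies ‖A_Φ(P_{θ'}) − z_Φ‖₂ ≤ ‖A_Φ(P_{θ̂}) − z_Φ‖₂ + 2√ε where θ̂ minimizes ‖z_Φ − A_Φ(P_θ)‖₂ over θ ∈ Θ. Then for every Q ∈ G, ‖P_{θ'} − P₀‖_R ≤ ‖Q − P₀‖_R + 2γ√ε + 2γ‖z_Φ − A_Φ(P₀)‖₂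 + 2γ‖A_Φ(P₀) − A_Φ(Q)‖₂, where z_Φ = A_Φ(P̂_X). -/
theorem lrip_lpd_combination {V : Type*} [AddCommGroup V] [Module ℝ V]
    {m : ℕ} {Θ : Type*}
    (N : Seminorm ℝ V) (A : V → EuclideanSpace ℂ (Fin m)) (G : Set V)
    (P : Θ → V) (hPG : ∀ θ, P θ ∈ G) (hGP : ∀ Q ∈ G, ∃ θ, P θ = Q)
    (P₀ Pemp : V) (γ ε : ℝ) (hγ : 0 ≤ γ) (hε : 0 ≤ ε)
    (hLRIP : ∀ p ∈ G, ∀ q ∈ G, N (p - q) ≤ γ * ‖A p - A q‖)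
    (θ' θhat : Θ)
    (hmin : ∀ θ, ‖A Pemp - A (P θhat)‖ ≤ ‖A Pemp - A (P θ)‖)
    (hsub : ‖A (P θ') - A Pemp‖ ≤ ‖A (P θhat) - A Pemp‖ + 2 * Real.sqrt ε) :
    ∀ Q ∈ G, N (P θ' - P₀) ≤
      N (Q - P₀) + 2 * γ * Real.sqrt ε + 2 * γ * ‖A Pemp - A P₀‖
        + 2 * γ * ‖A P₀ - A Q‖ := by
  intro Q hQ
  obtain ⟨θQ, hθQ⟩ := hGP Q hQ
  have h1 : N (P θ' - P₀) ≤ N (P θ' - Q) + N (Q - P₀) := by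
    calc N (P θ' - P₀) = N ((P θ' - Q) + (Q - P₀)) := by abel_nf
    _ ≤ N (P θ' - Q) + N (Q - P₀) := map_add_le_add N _ _
  have h2 : N (P θ' - Q) ≤ γ * ‖A (P θ') - A Q‖ := hLRIP _ (hPG θ') _ hQ
  have h3 : ‖A (P θ') - A Q‖ ≤ ‖A (P θ') - A Pemp‖ + ‖A Pemp - A P₀‖ + ‖A P₀ - A Q‖ := by
    calc ‖A (P θ') - A Q‖ = ‖(A (P θ') - A Pemp) + (A Pemp - A P₀) + (A P₀ - A Q)‖ := by abel_nf
    _ ≤ _ := norm_add₃_le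
  have h4 : ‖A (P θ') - A Pemp‖ ≤ 2 * Real.sqrt ε + ‖A Pemp - A P₀‖ + ‖A P₀ - A Q‖ := by
    have hm := hmin θQ
    rw [hθQ] at hm
    have h5 : ‖A Pemp - A Q‖ ≤ ‖A Pemp - A P₀‖ + ‖A P₀ - A Q‖ := by
      calc ‖A Pemp - A Q‖ = ‖(A Pemp - A P₀) + (A P₀ - A Q)‖ := by abel_nf
      _ ≤ _ := norm_add_le _ _
    have := norm_sub_rev (A (P θhat)) (A Pemp)
    linarith [hsub]
  have hsq : 0 ≤ Real.sqrt ε := Real.sqrt_nonneg ε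
  have h6 : ‖A (P θ') - A Q‖ ≤ 2 * Real.sqrt ε + 2 * ‖A Pemp - A P₀‖ + 2 * ‖A P₀ - A Q‖ := by
    linarith
  have h7 := mul_le_mul_of_nonneg_left h6 hγ
  nlinarith [h1, h2, h7]
end
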